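/- arXiv:math/0402344 — 2 statements merged into one kernel-verified Lean document; each statement's English description precedes it below -/
import Mathlib

section
/- For all integers n ≥ k ≥ 1, the Fibonomial coefficient C_F(n,k) = F_n! / (F_k! · F_{n-k}!) is a positive integer, where F_m! denotes the product F_1·F_2·…·F_m of the first m Fibonacci numbers. -/
/-- Fibonacci factorial: product of the first `n` Fibonacci numbers. -/
def fibFact (n : ℕ) : ℕ := ∏ i ∈ Finset.range n, Nat.fib (i + 1)

/-- Fibonomial coefficient `C_F(n,k) = F_n! / (F_k! · F_{n-k}!)`, zero for `k > n`. -/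
def fibnomial (n k : ℕ) : ℕ :=
  if k ≤ n then fibFact n / (fibFact k * fibFact (n - k)) else 0

/-- Recursive fibonomial via the Fibonacci Pascal rule. -/
def fibB : ℕ → ℕ → ℕ
  | _, 0 => 1
  | 0, _+1 => 0
  | n+1, k+1 => Nat.fib (n - k + 1) * fibB n k + Nat.fib k * fibB n (k+1)

lemma fibFact_pos (n : ℕ) : 0 < fibFact n :=
  Finset.prod_pos fun i _ => Nat.fib_pos.2 (Nat.succ_pos i)

lemma fibFact_succ (n : ℕ) : fibFact (n+1) = fibFact n * Nat.fib (n+1) :=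
  Finset.prod_range_succ _ _

lemma fibB_eq_zero : ∀ n k : ℕ, n < k → fibB n k = 0
  | _, 0, h => absurd h (Nat.not_lt_zero _)
  | 0, _+1, _ => rfl
  | n+1, k+1, h => by
    have h1 : n < k := Nat.lt_of_succ_lt_succ h
    rw [fibB, fibB_eq_zero n k h1, fibB_eq_zero n (k+1) (h1.trans (Nat.lt_succ_self _))]
    simp

lemma fibB_mul : ∀ n k : ℕ, k ≤ n →
    fibFact k * fibFact (n - k) * fibB n k = fibFact n
  | n, 0, _ => by simp [fibB, fibFact]
  | 0, k+1, h => absurd h (Nat.not_succ_le_zero _)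
  | n+1, k+1, h => by
    have hk : k ≤ n := Nat.lt_succ_iff.mp h
    rw [fibB, Nat.succ_sub_succ, fibFact_succ k, Nat.mul_add]
    have t1 : fibFact k * Nat.fib (k+1) * fibFact (n - k) *
        (Nat.fib (n - k + 1) * fibB n k)
        = (Nat.fib (k+1) * Nat.fib (n - k + 1)) *
          (fibFact k * fibFact (n - k) * fibB n k) := by ring
    rcases Nat.lt_or_ge k n with hlt | hge
    · -- k+1 ≤ n
      have hk1 : k + 1 ≤ n := hlt
      have hsub : n - k = (n - (k+1)) + 1 := by omega
      have t2 : fibFact k * Nat.fib (k+1) * fibFact (n - k) *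
          (Nat.fib k * fibB n (k+1))
          = (Nat.fib k * Nat.fib (n - k)) *
            (fibFact (k+1) * fibFact (n - (k+1)) * fibB n (k+1)) := by
        rw [hsub, fibFact_succ, fibFact_succ, ← hsub]
        ring
      rw [t1, t2, fibB_mul n k hk, fibB_mul n (k+1) hk1]
      have hadd : Nat.fib (k + (n - k) + 1)
          = Nat.fib k * Nat.fib (n - k) + Nat.fib (k+1) * Nat.fib (n - k + 1) :=
        Nat.fib_add k (n - k)
      have hnk : k + (n - k) = n := Nat.add_sub_cancel' hk
      rw [hnk] at hadd
      rw [fibFact_succ n, hadd]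
      ring
    · -- k = n
      have hkn : k = n := le_antisymm hk hge
      subst hkn
      rw [fibB_eq_zero k (k+1) (Nat.lt_succ_self _)]
      simp only [Nat.mul_zero, Nat.add_zero]
      rw [t1, fibB_mul k k le_rfl]
      simp [Nat.sub_self, fibFact_succ, Nat.mul_comm]

theorem fibnomial_pos_int (n k : ℕ) (hk : 1 ≤ k) (hkn : k ≤ n) :
    fibFact k * fibFact (n - k) ∣ fibFact n ∧
      0 < fibFact n / (fibFact k * fibFact (n - k)) := by
  have key := fibB_mul n k hkn
  have hdvd : fibFact k * fibFact (n - k) ∣ fibFact n := ⟨fibB n k, key.symm⟩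
  have hdpos : 0 < fibFact k * fibFact (n - k) :=
    Nat.mul_pos (fibFact_pos k) (fibFact_pos (n - k))
  refine ⟨hdvd, ?_⟩
  have : fibFact n / (fibFact k * fibFact (n - k)) = fibB n k := by
    rw [← key, Nat.mul_div_cancel_left _ hdpos]
  rw [this]
  rcases Nat.eq_zero_or_pos (fibB n k) with h0 | h0
  · rw [h0, Nat.mul_zero] at key
    exact absurd key.symm (fibFact_pos n).ne'
  · exact h0
end

section
/- With weight vector w = (1, q, q^2, …, q^{n-1}), the Konvalina coefficient of the second kind equals the Gaussian binomial coefficient: S_k^n(w) = binomial(n+k-1, k)_q as polynomials in q. -/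
open Polynomial

/-- Konvalina's generalized binomial coefficient of the second kind,
with polynomial weights. -/
noncomputable def konvalinaS (w : ℕ → Polynomial ℚ) (n k : ℕ) : Polynomial ℚ :=
  ∑ m ∈ (Finset.Icc 1 n).sym k, ((m : Multiset ℕ).map w).prod

noncomputable def konvT (w : ℕ → Polynomial ℚ) (s : Finset ℕ) (k : ℕ) : Polynomial ℚ :=
  ∑ m ∈ s.sym k, ((m : Multiset ℕ).map w).prod

lemma konvT_insert (w : ℕ → Polynomial ℚ) {a : ℕ} {s : Finset ℕ} (h : a ∉ s) (k : ℕ) :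
    konvT w (insert a s) k = ∑ i ∈ Finset.range (k+1), w a ^ i * konvT w s (k - i) := by
  rw [konvT, ← Finset.sum_coe_sort]
  rw [← Equiv.sum_comp (Finset.symInsertEquiv h).symm
      (fun m : {x // x ∈ (insert a s).sym k} => (Multiset.map w (m : Sym ℕ k)).prod)]
  rw [← Finset.univ_sigma_univ, Finset.sum_sigma]
  rw [← Fin.sum_univ_eq_sum_range (fun i => w a ^ i * konvT w s (k - i)) (k+1)]
  refine Finset.sum_congr rfl fun i _ => ?_
  rw [konvT, Finset.mul_sum, ← Finset.sum_coe_sort (s.sym (k - (i:ℕ)))]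
  refine Finset.sum_congr rfl fun m _ => ?_
  simp only [Finset.symInsertEquiv_symm_apply_coe]
  rw [Sym.coe_fill]
  rw [Multiset.map_add, Multiset.prod_add, Sym.coe_replicate, Multiset.map_replicate,
    Multiset.prod_replicate, mul_comm]

lemma konvT_rec (w : ℕ → Polynomial ℚ) {a : ℕ} {s : Finset ℕ} (h : a ∉ s) (k : ℕ) :
    konvT w (insert a s) (k+1) = konvT w s (k+1) + w a * konvT w (insert a s) k := by
  rw [konvT_insert w h (k+1), konvT_insert w h k, Finset.sum_range_succ' _ (k+1),
    Finset.mul_sum]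
  simp only [pow_succ', Nat.succ_sub_succ, pow_zero, one_mul, Nat.sub_zero, mul_assoc]
  rw [add_comm]

lemma konvalinaS_rec (w : ℕ → Polynomial ℚ) (n k : ℕ) :
    konvalinaS w (n+1) (k+1) = konvalinaS w n (k+1) + w (n+1) * konvalinaS w (n+1) k := by
  have h : (n+1) ∉ Finset.Icc 1 n := by simp
  have hIcc : Finset.Icc 1 (n+1) = insert (n+1) (Finset.Icc 1 n) := by
    exact (Finset.insert_Icc_right_eq_Icc_add_one (by omega)).symm
  show konvT w (Finset.Icc 1 (n+1)) (k+1) = konvT w (Finset.Icc 1 n) (k+1)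
      + w (n+1) * konvT w (Finset.Icc 1 (n+1)) k
  rw [hIcc, konvT_rec w h k]

lemma konvalinaS_zero (w : ℕ → Polynomial ℚ) (n : ℕ) : konvalinaS w n 0 = 1 := by
  rw [konvalinaS, Finset.sym_zero, Finset.sum_singleton]
  rfl

lemma konvalinaS_one (k : ℕ) : konvalinaS (fun i => X ^ (i - 1)) 1 k = 1 := by
  rw [konvalinaS, Finset.Icc_self, Finset.sym_singleton, Finset.sum_singleton]
  simp [Sym.coe_replicate]

lemma prod_shift (n k : ℕ) :
    ∏ i ∈ Finset.Icc 1 (k+1), (1 - X^(n+i) : Polynomial ℚ)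
      = (1 - X^(n+1)) * ∏ i ∈ Finset.Icc 1 k, (1 - X^(n+1+i)) := by
  induction k with
  | zero => simp
  | succ k ih =>
    rw [Finset.prod_Icc_succ_top (by omega), ih, Finset.prod_Icc_succ_top (by omega)]
    have : n + (k+1+1) = n+1+(k+1) := by omega
    rw [this]; ring

lemma key (n k : ℕ) :
    konvalinaS (fun i => X ^ (i - 1)) (n+1) k * ∏ i ∈ Finset.Icc 1 k, (1 - X ^ i) =
      ∏ i ∈ Finset.Icc 1 k, (1 - X ^ (n + i) : Polynomial ℚ) := by
  induction n generalizing k with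
  | zero => simp [konvalinaS_one]
  | succ n ihn =>
    induction k with
    | zero => simp [konvalinaS_zero]
    | succ k ihk =>
      rw [konvalinaS_rec]
      have h1 := ihn (k+1)
      rw [prod_shift n k] at h1
      rw [Finset.prod_Icc_succ_top (by omega : 1 ≤ k+1) (fun i => (1 - X^i : Polynomial ℚ))]
        at h1 ⊢
      rw [Finset.prod_Icc_succ_top (by omega : 1 ≤ k+1)
        (fun i => (1 - X^(n+1+i) : Polynomial ℚ))]
      simp only [Nat.add_sub_cancel]
      linear_combination h1 + (X:Polynomial ℚ)^(n+1) * (1 - X^(k+1)) * ihk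

/-- With weights `w_i = q^(i-1)`, the Konvalina coefficient of the second kind is the
Gaussian binomial coefficient `(n+k-1 choose k)_q = ∏_{i=1}^k (1-q^{n-1+i})/(1-q^i)`,
stated as a polynomial identity with denominators cleared. -/
theorem konvalinaS_geometric_eq_gaussian (n k : ℕ) (hn : 1 ≤ n) :
    konvalinaS (fun i => X ^ (i - 1)) n k * ∏ i ∈ Finset.Icc 1 k, (1 - X ^ i) =
      ∏ i ∈ Finset.Icc 1 k, (1 - X ^ (n - 1 + i)) := by
  obtain ⟨m, rfl⟩ := Nat.exists_eq_add_of_le hn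
  rw [show 1 + m = m + 1 by omega]
  simpa using key m k
end
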